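/- Let k(y,y') = ⟨φ(y), φ(y')⟩ be a symmetric positive-definite kernel with convex feature map φ and φ(0)=0. Let M_u^{fo}(X^w_u) = E_U[M_u^{tot}(X^w_u, U)] with (X^{w'}_u, U') an i.i.d. copy of (X^w_u, U). Then 0 ≤ E[k(M_u^{fo}(X^w_u), M_u^{fo}(X^{w'}_u))] ≤ E[k(M_u^{tot}(X^w_u, U), M_u^{tot}(X^{w'}_u, U'))], provided all expectations are finite. -/
import Mathlib


open MeasureTheory Filter

private lemma aux_main {α β : Type*} [MeasurableSpace α] [MeasurableSpace β]
    (μ : Measure α) (ν : Measure β) [IsProbabilityMeasure μ] [IsProbabilityMeasure ν]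
    {L : ℕ} (U : α → β → Fin L → ℝ) (V : α → Fin L → ℝ)
    (hU_nonneg : ∀ a b i, 0 ≤ U a b i)
    (hV_nonneg : ∀ a i, 0 ≤ V a i)
    (hUm : ∀ a i, AEStronglyMeasurable (fun b => U a b i) ν)
    (hVW : ∀ a, (∀ i, Integrable (fun b => U a b i) ν) → ∀ i, V a i ≤ ∫ b, U a b i ∂ν)
    (h_fin_tot : Integrable
      (fun p : (α × β) × (α × β) => ∑ i, U p.1.1 p.1.2 i * U p.2.1 p.2.2 i)
      ((μ.prod ν).prod (μ.prod ν))) :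
    (∫ a, ∫ a', ∑ i, V a i * V a' i ∂μ ∂μ)
      ≤ ∫ a, ∫ b, ∫ a', ∫ b', ∑ i, U a b i * U a' b' i ∂ν ∂μ ∂ν ∂μ := by
  set W : α → Fin L → ℝ := fun a i => ∫ b, U a b i ∂ν with hWdef
  have hW_nonneg : ∀ a i, 0 ≤ W a i := fun a i => integral_nonneg fun b => hU_nonneg a b i
  -- slice integrability facts from `h_fin_tot`
  have hG1 : ∀ᵐ p ∂(μ.prod ν),
      Integrable (fun q : α × β => ∑ i, U p.1 p.2 i * U q.1 q.2 i) (μ.prod ν) :=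
    h_fin_tot.prod_right_ae
  have hG2 : ∀ᵐ q ∂(μ.prod ν),
      Integrable (fun p : α × β => ∑ i, U p.1 p.2 i * U q.1 q.2 i) (μ.prod ν) :=
    h_fin_tot.prod_left_ae
  -- coordinatewise ν-integrability for a.e. a
  have hA1 : ∀ i, ∀ᵐ a ∂μ, Integrable (fun b => U a b i) ν := by
    intro i
    by_cases hz : ∀ᵐ p ∂(μ.prod ν), U p.1 p.2 i = 0
    · filter_upwards [Measure.ae_ae_of_ae_prod hz] with a ha
      exact (integrable_zero _ _ _).congr (ha.mono fun b hb => hb.symm)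
    · have hfreq : ∃ᶠ p in ae (μ.prod ν), ¬ U p.1 p.2 i = 0 := Filter.not_eventually.mp hz
      obtain ⟨q₀, hq₀int, hq₀ne⟩ := (hG2.and_frequently hfreq).exists
      have hq₀pos : 0 < U q₀.1 q₀.2 i := lt_of_le_of_ne (hU_nonneg _ _ _) (Ne.symm hq₀ne)
      filter_upwards [hq₀int.prod_right_ae] with a ha
      have hmul : Integrable (fun b => U a b i * U q₀.1 q₀.2 i) ν := by
        refine ha.mono' ((hUm a i).mul_const _) (Eventually.of_forall fun b => ?_)
        have h0 : 0 ≤ U a b i * U q₀.1 q₀.2 i :=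
          mul_nonneg (hU_nonneg _ _ _) (hU_nonneg _ _ _)
        rw [Real.norm_of_nonneg h0]
        exact Finset.single_le_sum (f := fun j => U a b j * U q₀.1 q₀.2 j)
          (fun j _ => mul_nonneg (hU_nonneg _ _ _) (hU_nonneg _ _ _)) (Finset.mem_univ i)
      refine (hmul.mul_const (U q₀.1 q₀.2 i)⁻¹).congr (Eventually.of_forall fun b => ?_)
      show U a b i * U q₀.1 q₀.2 i * (U q₀.1 q₀.2 i)⁻¹ = U a b i
      rw [mul_assoc, mul_inv_cancel₀ hq₀pos.ne', mul_one]
  have hA1' : ∀ᵐ a ∂μ, ∀ i, Integrable (fun b => U a b i) ν := ae_all_iff.mpr hA1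
  -- pull constants out of coordinate sums
  have hpull_right : ∀ a, (∀ i, Integrable (fun b => U a b i) ν) → ∀ c : Fin L → ℝ,
      ∫ b, ∑ i, U a b i * c i ∂ν = ∑ i, W a i * c i := by
    intro a ha c
    rw [integral_finset_sum _ (fun i _ => (ha i).mul_const (c i))]
    exact Finset.sum_congr rfl fun i _ => integral_mul_const _ _
  have hpull_left : ∀ a, (∀ i, Integrable (fun b => U a b i) ν) → ∀ c : Fin L → ℝ,
      ∫ b, ∑ i, c i * U a b i ∂ν = ∑ i, c i * W a i := by
    intro a ha c
    rw [integral_finset_sum _ (fun i _ => (ha i).const_mul (c i))]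
    exact Finset.sum_congr rfl fun i _ => integral_const_mul _ _
  -- reassociated integrability, and its slices
  have hassoc : Integrable
      (fun x : α × β × (α × β) => ∑ i, U x.1 x.2.1 i * U x.2.2.1 x.2.2.2 i)
      (μ.prod (ν.prod ((μ.prod ν)))) := by
    have hmp := measurePreserving_prodAssoc μ ν (μ.prod ν)
    rw [← hmp.integrable_comp_emb MeasurableEquiv.prodAssoc.measurableEmbedding]
    exact h_fin_tot
  have hA4 : ∀ᵐ a ∂μ, Integrable
      (fun r : β × (α × β) => ∑ i, U a r.1 i * U r.2.1 r.2.2 i) (ν.prod (μ.prod ν)) :=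
    hassoc.prod_right_ae
  have hA3' : ∀ᵐ z : α × β ∂(μ.prod ν),
      (∫ a', ∫ b', ∑ i, U z.1 z.2 i * U a' b' i ∂ν ∂μ)
        = ∫ q, ∑ i, U z.1 z.2 i * U q.1 q.2 i ∂(μ.prod ν) := by
    filter_upwards [hG1] with p hp
    exact (integral_prod _ hp).symm
  have hA3 := Measure.ae_ae_of_ae_prod hA3'
  -- integrability of the RHS as a function of a
  have hΦ : Integrable
      (fun p : α × β => ∫ q, ∑ i, U p.1 p.2 i * U q.1 q.2 i ∂(μ.prod ν)) (μ.prod ν) :=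
    h_fin_tot.integral_prod_left
  have hJ : Integrable
      (fun p : α × β => ∫ a', ∫ b', ∑ i, U p.1 p.2 i * U a' b' i ∂ν ∂μ) (μ.prod ν) := by
    apply hΦ.congr
    filter_upwards [hG1] with p hp
    exact integral_prod _ hp
  have hRHSint : Integrable
      (fun a => ∫ b, ∫ a', ∫ b', ∑ i, U a b i * U a' b' i ∂ν ∂μ ∂ν) μ :=
    hJ.integral_prod_left
  -- main comparison
  refine integral_mono_of_nonneg
    (Eventually.of_forall fun a => integral_nonneg fun a' =>
      Finset.sum_nonneg fun i _ => mul_nonneg (hV_nonneg _ _) (hV_nonneg _ _))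
    hRHSint ?_
  filter_upwards [hA1', hA3, hA4] with a h1 h3 h4
  have hVa : ∀ i, V a i ≤ W a i := hVW a h1
  have hQint : Integrable
      (fun q : α × β => ∫ b, ∑ i, U a b i * U q.1 q.2 i ∂ν) (μ.prod ν) :=
    h4.integral_prod_right
  have hkey : ∀ q : α × β,
      ∫ b, ∑ i, U a b i * U q.1 q.2 i ∂ν = ∑ i, W a i * U q.1 q.2 i :=
    fun q => hpull_right a h1 _
  have hQint' : Integrable (fun q : α × β => ∑ i, W a i * U q.1 q.2 i) (μ.prod ν) :=
    hQint.congr (Eventually.of_forall hkey)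
  have hg_int : Integrable (fun a' => ∫ b', ∑ i, W a i * U a' b' i ∂ν) μ :=
    hQint'.integral_prod_left
  calc ∫ a', ∑ i, V a i * V a' i ∂μ
      ≤ ∫ a', ∫ b', ∑ i, W a i * U a' b' i ∂ν ∂μ := by
        refine integral_mono_of_nonneg
          (Eventually.of_forall fun a' =>
            Finset.sum_nonneg fun i _ => mul_nonneg (hV_nonneg _ _) (hV_nonneg _ _))
          hg_int ?_
        filter_upwards [hA1'] with a' h1'
        rw [hpull_left a' h1' (W a)]
        exact Finset.sum_le_sum fun i _ =>
          mul_le_mul (hVa i) (hVW a' h1' i) (hV_nonneg _ _) (hW_nonneg a i)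
    _ = ∫ q, ∑ i, W a i * U q.1 q.2 i ∂(μ.prod ν) := (integral_prod _ hQint').symm
    _ = ∫ q, ∫ b, ∑ i, U a b i * U q.1 q.2 i ∂ν ∂(μ.prod ν) :=
        integral_congr_ae (Eventually.of_forall fun q => (hkey q).symm)
    _ = ∫ b, ∫ q, ∑ i, U a b i * U q.1 q.2 i ∂(μ.prod ν) ∂ν :=
        (integral_integral_swap h4).symm
    _ = ∫ b, ∫ a', ∫ b', ∑ i, U a b i * U a' b' i ∂ν ∂μ ∂ν :=
        integral_congr_ae (h3.mono fun b hb => hb.symm)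

/-- first part of Lemma 3: for an SPD kernel
`k(y,y') = ⟨φ(y), φ(y')⟩` with convex (coordinatewise, nonnegative) feature
map `φ` and `φ(0) = 0`, and `M_u^{fo}(v) = E_U[M_u^{tot}(v, U)]` with
independent primed copies,
`0 ≤ E[k(M_u^{fo}(X^w_u), M_u^{fo}(X^{w'}_u))]
   ≤ E[k(M_u^{tot}(X^w_u,U), M_u^{tot}(X^{w'}_u,U'))]`,
provided all expectations are finite. -/
theorem stmt_7 {α β : Type*} [MeasurableSpace α] [MeasurableSpace β]
    (μ : Measure α) (ν : Measure β) [IsProbabilityMeasure μ] [IsProbabilityMeasure ν]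
    {N L : ℕ} (φ : (Fin N → ℝ) → (Fin L → ℝ))
    (hφ_conv : ∀ i, ConvexOn ℝ Set.univ fun y => φ y i)
    (hφ_nonneg : ∀ y i, 0 ≤ φ y i)
    (hφ_zero : φ 0 = 0)
    (T : α → β → (Fin N → ℝ))  -- the total sensitivity functional `M_u^{tot}`
    (hT_int : ∀ a, Integrable (T a) ν)
    (h_fin_tot : Integrable
      (fun p : (α × β) × (α × β) => ∑ i, φ (T p.1.1 p.1.2) i * φ (T p.2.1 p.2.2) i)
      ((μ.prod ν).prod (μ.prod ν)))
    (h_fin_fo : Integrable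
      (fun p : α × α => ∑ i, φ (∫ b, T p.1 b ∂ν) i * φ (∫ b, T p.2 b ∂ν) i)
      (μ.prod μ)) :
    0 ≤ (∫ a, ∫ a', ∑ i, φ (∫ b, T a b ∂ν) i * φ (∫ b, T a' b ∂ν) i ∂μ ∂μ) ∧
    (∫ a, ∫ a', ∑ i, φ (∫ b, T a b ∂ν) i * φ (∫ b, T a' b ∂ν) i ∂μ ∂μ)
      ≤ ∫ a, ∫ b, ∫ a', ∫ b', ∑ i, φ (T a b) i * φ (T a' b') i ∂ν ∂μ ∂ν ∂μ := by
  constructor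
  · exact integral_nonneg fun a => integral_nonneg fun a' =>
      Finset.sum_nonneg fun i _ => mul_nonneg (hφ_nonneg _ _) (hφ_nonneg _ _)
  · refine aux_main μ ν (fun a b => φ (T a b)) (fun a => φ (∫ b, T a b ∂ν))
      (fun a b i => hφ_nonneg _ _) (fun a i => hφ_nonneg _ _) ?_ ?_ h_fin_tot
    · intro a i
      have hc : Continuous fun y : Fin N → ℝ => φ y i :=
        continuousOn_univ.mp ((hφ_conv i).continuousOn isOpen_univ)
      exact hc.comp_aestronglyMeasurable (hT_int a).1
    · intro a ha i
      exact (hφ_conv i).map_integral_le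
        ((hφ_conv i).continuousOn isOpen_univ) isClosed_univ
        (Eventually.of_forall fun b => Set.mem_univ _) (hT_int a) (ha i)
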